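/- Let $X$ be a reflexive admissible Banach subspace of an associative algebra $\mathcal{A}$ with trace $\tau$, meaning: the space $Y(X) = \{y \in \mathcal{A} : yx, xy \in \mathcal{L}^1 \text{ for all } x \in X\}$ with norm $|y|_{Y(X)} = \sup_{|x|_X = 1} |\tau(yx)|$ is a Banach space, the map $y \mapsto (x \mapsto \tau(yx))$ is a surjection from $Y(X)$ onto $X^*$, and $\tau(xy) = \tau(yx)$ for all $x \in X$, $y \in Y(X)$. If additionally $Y(X)$ is admissible, then $Y(Y(X)) = X$ as sets and $|x|_{Y(Y(X))} = |x|_X$ for all $x \in X$. -/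

import Mathlib

section Helpers

variable {A : Type*} [Ring A] [Algebra ℂ A] {L1 : Submodule ℂ A}

lemma tau_congr (τ : L1 →ₗ[ℂ] ℂ) {a b : A} (h : a = b) (ha : a ∈ L1) (hb : b ∈ L1) :
    τ ⟨a, ha⟩ = τ ⟨b, hb⟩ := by subst h; rfl

lemma tau_add (τ : L1 →ₗ[ℂ] ℂ) {a b : A} (ha : a ∈ L1) (hb : b ∈ L1) (hab : a + b ∈ L1) :
    τ ⟨a + b, hab⟩ = τ ⟨a, ha⟩ + τ ⟨b, hb⟩ := by
  have : (⟨a + b, hab⟩ : L1) = ⟨a, ha⟩ + ⟨b, hb⟩ := rfl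
  rw [this, map_add]

lemma tau_sub (τ : L1 →ₗ[ℂ] ℂ) {a b : A} (ha : a ∈ L1) (hb : b ∈ L1) (hab : a - b ∈ L1) :
    τ ⟨a - b, hab⟩ = τ ⟨a, ha⟩ - τ ⟨b, hb⟩ := by
  have : (⟨a - b, hab⟩ : L1) = ⟨a, ha⟩ - ⟨b, hb⟩ := rfl
  rw [this, map_sub]

lemma tau_smul (τ : L1 →ₗ[ℂ] ℂ) {a : A} (c : ℂ) (ha : a ∈ L1) (hca : c • a ∈ L1) :
    τ ⟨c • a, hca⟩ = c * τ ⟨a, ha⟩ := by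
  have : (⟨c • a, hca⟩ : L1) = c • (⟨a, ha⟩ : L1) := rfl
  rw [this, map_smul, smul_eq_mul]

lemma tau_zero (τ : L1 →ₗ[ℂ] ℂ) {a : A} (h : a = 0) (ha : a ∈ L1) : τ ⟨a, ha⟩ = 0 := by
  have : (⟨a, ha⟩ : L1) = 0 := Subtype.ext h
  rw [this, map_zero]

end Helpers

lemma exists_norming {A : Type*} [Ring A] [Algebra ℂ A] (X : Set A) (nX : A → ℝ)
    (h0 : (0 : A) ∈ X) (hadd : ∀ x ∈ X, ∀ y ∈ X, x + y ∈ X)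
    (hsmul : ∀ (c : ℂ), ∀ x ∈ X, c • x ∈ X)
    (hdef : ∀ x ∈ X, (nX x = 0 ↔ x = 0))
    (hhom : ∀ (c : ℂ), ∀ x ∈ X, nX (c • x) = ‖c‖ * nX x)
    (htri : ∀ x ∈ X, ∀ y ∈ X, nX (x + y) ≤ nX x + nX y)
    (x : A) (hx : x ∈ X) (hx0 : x ≠ 0) :
    ∃ f : A → ℂ, (∀ a ∈ X, ∀ b ∈ X, f (a + b) = f a + f b) ∧
      (∀ (c : ℂ), ∀ a ∈ X, f (c • a) = c * f a) ∧
      (∀ a ∈ X, ‖f a‖ ≤ nX a) ∧ f x = (nX x : ℂ) := by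
  classical
  set M : Submodule ℂ A :=
    { carrier := X
      add_mem' := fun {a b} ha hb => hadd a ha b hb
      zero_mem' := h0
      smul_mem' := fun c a ha => hsmul c a ha } with hM
  letI : NormedAddCommGroup M := AddGroupNorm.toNormedAddCommGroup
    { toFun := fun m => nX m
      map_zero' := (hdef 0 h0).mpr rfl
      add_le' := fun a b => htri a a.2 b b.2
      neg' := fun a => by
        show nX ((-a : M) : A) = nX (a : A)
        have h1 : ((-a : M) : A) = (-1 : ℂ) • (a : A) := by simp [neg_one_smul]
        rw [h1, hhom (-1) a a.2]; simp
      eq_zero_of_map_eq_zero' := fun a ha => Subtype.ext ((hdef a a.2).mp ha) }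
  letI : NormedSpace ℂ M :=
    { norm_smul_le := fun c m => by
        have : ‖c • m‖ = ‖c‖ * ‖m‖ := hhom c m m.2
        exact this.le }
  have hxM : (⟨x, hx⟩ : M) ≠ 0 := fun h => hx0 (by simpa using congrArg Subtype.val h)
  obtain ⟨g, hg1, hgx⟩ := exists_dual_vector ℂ (⟨x, hx⟩ : M) (norm_ne_zero_iff.mpr hxM)
  refine ⟨fun a => if h : a ∈ X then g ⟨a, h⟩ else 0, ?_, ?_, ?_, ?_⟩
  · intro a ha b hb
    show (if h : a + b ∈ X then g ⟨a + b, h⟩ else 0)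
      = (if h : a ∈ X then g ⟨a, h⟩ else 0) + (if h : b ∈ X then g ⟨b, h⟩ else 0)
    rw [dif_pos (hadd a ha b hb), dif_pos ha, dif_pos hb]
    have : (⟨a + b, hadd a ha b hb⟩ : M) = ⟨a, ha⟩ + ⟨b, hb⟩ := rfl
    rw [this, map_add]
  · intro c a ha
    show (if h : c • a ∈ X then g ⟨c • a, h⟩ else 0) = c * (if h : a ∈ X then g ⟨a, h⟩ else 0)
    rw [dif_pos (hsmul c a ha), dif_pos ha]
    have : (⟨c • a, hsmul c a ha⟩ : M) = c • (⟨a, ha⟩ : M) := rfl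
    rw [this, map_smul, smul_eq_mul]
  · intro a ha
    show ‖(if h : a ∈ X then g ⟨a, h⟩ else 0)‖ ≤ nX a
    rw [dif_pos ha]
    calc ‖g ⟨a, ha⟩‖ ≤ ‖g‖ * ‖(⟨a, ha⟩ : M)‖ := g.le_opNorm _
    _ = nX a := by rw [hg1, one_mul]; rfl
  · show (if h : x ∈ X then g ⟨x, h⟩ else 0) = (nX x : ℂ)
    rw [dif_pos hx, hgx]; rfl

/-- `Y(S) = {y ∈ A : yx, xy ∈ L¹ for all x ∈ S}`. -/
def Yset {A : Type*} [Ring A] [Algebra ℂ A] (L1 : Submodule ℂ A) (S : Set A) : Set A :=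
  {y | ∀ x ∈ S, y * x ∈ L1 ∧ x * y ∈ L1}

/-- The norm `|y|_{Y(S)} = sup_{x ∈ S, n x = 1} |τ(yx)|`. -/
noncomputable def nYdef {A : Type*} [Ring A] [Algebra ℂ A] (L1 : Submodule ℂ A)
    (τ : L1 →ₗ[ℂ] ℂ) (S : Set A) (n : A → ℝ) (y : A) : ℝ :=
  sSup {r | ∃ x ∈ S, n x = 1 ∧ ∃ h : y * x ∈ L1, r = ‖τ ⟨y * x, h⟩‖}

lemma le_nYdef {A : Type*} [Ring A] [Algebra ℂ A] (L1 : Submodule ℂ A) (τ : L1 →ₗ[ℂ] ℂ)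
    (S : Set A) (n : A → ℝ) {y x : A}
    (hB : BddAbove {r : ℝ | ∃ x ∈ S, n x = 1 ∧ ∃ h : y * x ∈ L1, r = ‖τ ⟨y * x, h⟩‖})
    (hx : x ∈ S) (h1 : n x = 1) (h : y * x ∈ L1) :
    ‖τ ⟨y * x, h⟩‖ ≤ nYdef L1 τ S n y :=
  le_csSup hB ⟨x, hx, h1, h, rfl⟩

lemma nYdef_le {A : Type*} [Ring A] [Algebra ℂ A] (L1 : Submodule ℂ A) (τ : L1 →ₗ[ℂ] ℂ)
    (S : Set A) (n : A → ℝ) {y : A} {a : ℝ} (ha : 0 ≤ a)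
    (h : ∀ x, ∀ hx : x ∈ S, n x = 1 → ∀ hm : y * x ∈ L1, ‖τ ⟨y * x, hm⟩‖ ≤ a) :
    nYdef L1 τ S n y ≤ a :=
  Real.sSup_le (by rintro r ⟨x, hx, h1, hm, rfl⟩; exact h x hx h1 hm) ha

/-- `S` is a linear subspace of `A` which is a Banach space under the norm function `n`. -/
def IsBanachSub {A : Type*} [Ring A] [Algebra ℂ A] (S : Set A) (n : A → ℝ) : Prop :=
  (0 : A) ∈ S ∧ (∀ x ∈ S, ∀ y ∈ S, x + y ∈ S) ∧ (∀ (c : ℂ), ∀ x ∈ S, c • x ∈ S) ∧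
  (∀ x ∈ S, 0 ≤ n x) ∧ (∀ x ∈ S, (n x = 0 ↔ x = 0)) ∧
  (∀ (c : ℂ), ∀ x ∈ S, n (c • x) = ‖c‖ * n x) ∧
  (∀ x ∈ S, ∀ y ∈ S, n (x + y) ≤ n x + n y) ∧
  (∀ u : ℕ → A, (∀ k, u k ∈ S) →
    (∀ ε : ℝ, 0 < ε → ∃ N, ∀ p ≥ N, ∀ q ≥ N, n (u p - u q) < ε) →
    ∃ x ∈ S, ∀ ε : ℝ, 0 < ε → ∃ N, ∀ p ≥ N, n (u p - x) < ε)

/-- Admissibility of the Banach subspace `(S, n)` of `(A, τ)`: `Y(S)` with the norm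
`|·|_{Y(S)}` is a Banach space (with finite norm), the map `y ↦ τ(y ·)` is onto the space
of bounded linear functionals on `S`, and the trace commutes: `τ(xy) = τ(yx)`. -/
def Admissible {A : Type*} [Ring A] [Algebra ℂ A] (L1 : Submodule ℂ A)
    (τ : L1 →ₗ[ℂ] ℂ) (S : Set A) (n : A → ℝ) : Prop :=
  IsBanachSub (Yset L1 S) (nYdef L1 τ S n) ∧
  (∀ y ∈ Yset L1 S,
    BddAbove {r : ℝ | ∃ x ∈ S, n x = 1 ∧ ∃ h : y * x ∈ L1, r = ‖τ ⟨y * x, h⟩‖}) ∧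
  (∀ f : A → ℂ,
    (∀ x ∈ S, ∀ y ∈ S, f (x + y) = f x + f y) →
    (∀ (c : ℂ), ∀ x ∈ S, f (c • x) = c * f x) →
    (∃ C : ℝ, ∀ x ∈ S, ‖f x‖ ≤ C * n x) →
    ∃ y, ∃ hy : y ∈ Yset L1 S, ∀ x, ∀ hx : x ∈ S, f x = τ ⟨y * x, (hy x hx).1⟩) ∧
  (∀ x, ∀ hx : x ∈ S, ∀ y, ∀ hy : y ∈ Yset L1 S,
    τ ⟨x * y, (hy x hx).2⟩ = τ ⟨y * x, (hy x hx).1⟩)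

/-- **Lemma 3.3.**  Let `X` be a reflexive admissible Banach subspace of the algebra `A`
with trace `τ`, such that `Y(X)` is also admissible.  (Reflexivity is expressed, via the
isometric identification `Y(X) ≅ X*`, as: every bounded linear functional on `Y(X)` is
represented by some `x ∈ X` through the trace pairing.)  Then `Y(Y(X)) = X` as sets and
`|x|_{Y(Y(X))} = |x|_X` for all `x ∈ X`. -/
theorem stmt1 {A : Type*} [Ring A] [Algebra ℂ A]
    (L1 : Submodule ℂ A) (τ : L1 →ₗ[ℂ] ℂ)
    (X : Set A) (nX : A → ℝ)
    (hX : IsBanachSub X nX)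
    (hadm : Admissible L1 τ X nX)
    (hrefl : ∀ f : A → ℂ,
      (∀ y ∈ Yset L1 X, ∀ z ∈ Yset L1 X, f (y + z) = f y + f z) →
      (∀ (c : ℂ), ∀ y ∈ Yset L1 X, f (c • y) = c * f y) →
      (∃ C : ℝ, ∀ y ∈ Yset L1 X, ‖f y‖ ≤ C * nYdef L1 τ X nX y) →
      ∃ x, ∃ hx : x ∈ X, ∀ y, ∀ hy : y ∈ Yset L1 X, f y = τ ⟨y * x, (hy x hx).1⟩)
    (hadmY : Admissible L1 τ (Yset L1 X) (nYdef L1 τ X nX)) :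
    Yset L1 (Yset L1 X) = X ∧
    ∀ x ∈ X, nYdef L1 τ (Yset L1 X) (nYdef L1 τ X nX) x = nX x := by
  classical
  obtain ⟨hX0, hXadd, hXsmul, hXnn, hXdef, hXhom, hXtri, -⟩ := hX
  obtain ⟨⟨hY0, hYadd, hYsmul, hYnn, hYdf, hYhom, hYtri, -⟩, hXBdd, hXSurj, hXTr⟩ := hadm
  obtain ⟨⟨hYY0, hYYadd, hYYsmul, hYYnn, hYYdf, hYYhom, hYYtri, -⟩, hYBdd, hYSurj, hYTr⟩ := hadmY
  set Y : Set A := Yset L1 X with hYdefn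
  set nY : A → ℝ := nYdef L1 τ X nX with hnYdefn
  set YY : Set A := Yset L1 Y with hYYdefn
  set nYY : A → ℝ := nYdef L1 τ Y nY with hnYYdefn
  -- X ⊆ YY
  have hXsubYY : X ⊆ YY := fun x hx y hy => ⟨(hy x hx).2, (hy x hx).1⟩
  -- the zero-sup principle for nYY
  have hzero : ∀ z, ∀ hz : z ∈ YY,
      (∀ y, ∀ hy : y ∈ Y, ∀ h : z * y ∈ L1, τ ⟨z * y, h⟩ = 0) → nYY z = 0 := by
    intro z hz hv
    refine le_antisymm ?_ (hYYnn z hz)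
    rw [hnYYdefn]
    refine nYdef_le L1 τ Y nY le_rfl ?_
    intro y hy h1 hm
    rw [hv y hy hm]
    simp
  -- YY ⊆ X
  have hYYsubX : YY ⊆ X := by
    intro z hz
    set f : A → ℂ := fun a => if h : a ∈ Y then τ ⟨a * z, (hz a h).2⟩ else 0 with hf
    have hfval : ∀ y, ∀ hy : y ∈ Y, f y = τ ⟨y * z, (hz y hy).2⟩ := fun y hy => dif_pos hy
    have fadd : ∀ a ∈ Y, ∀ b ∈ Y, f (a + b) = f a + f b := by
      intro a ha b hb
      rw [hfval _ (hYadd a ha b hb),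
        tau_congr τ (add_mul a b z) ((hz _ (hYadd a ha b hb)).2)
          (L1.add_mem (hz a ha).2 (hz b hb).2),
        tau_add τ (hz a ha).2 (hz b hb).2, hfval a ha, hfval b hb]
    have fsmul : ∀ (c : ℂ), ∀ a ∈ Y, f (c • a) = c * f a := by
      intro c a ha
      rw [hfval _ (hYsmul c a ha),
        tau_congr τ (smul_mul_assoc c a z) ((hz _ (hYsmul c a ha)).2)
          (L1.smul_mem c (hz a ha).2),
        tau_smul τ c (hz a ha).2, hfval a ha]
    have fbdd : ∃ C : ℝ, ∀ y ∈ Y, ‖f y‖ ≤ C * nY y := by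
      refine ⟨nYY z, ?_⟩
      intro y hy
      rw [hfval y hy]
      by_cases h0 : nY y = 0
      · have hy0 : y = 0 := (hYdf y hy).mp h0
        rw [h0, mul_zero, tau_zero τ (by rw [hy0, zero_mul]) _]
        simp
      · have hpos : 0 < nY y := (hYnn y hy).lt_of_ne (Ne.symm h0)
        set c : ℂ := (((nY y)⁻¹ : ℝ) : ℂ) with hc
        have hy' : c • y ∈ Y := hYsmul c y hy
        have h1 : nY (c • y) = 1 := by
          rw [hYhom c y hy, hc, Complex.norm_real, Real.norm_eq_abs,
            abs_of_pos (inv_pos.mpr hpos), inv_mul_cancel₀ h0]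
        have hle : ‖τ ⟨z * (c • y), (hz _ hy').1⟩‖ ≤ nYY z := by
          rw [hnYYdefn]
          exact le_nYdef L1 τ Y nY (hYBdd z hz) hy' h1 _
        have heq : τ ⟨y * z, (hz y hy).2⟩ = τ ⟨z * y, (hz y hy).1⟩ := hYTr y hy z hz
        have heq2 : τ ⟨z * (c • y), (hz _ hy').1⟩ = c * τ ⟨z * y, (hz y hy).1⟩ := by
          rw [tau_congr τ (mul_smul_comm c z y) ((hz _ hy').1) (L1.smul_mem c (hz y hy).1),
            tau_smul τ c (hz y hy).1]
        rw [heq2, norm_mul, hc, Complex.norm_real, Real.norm_eq_abs, abs_of_pos (inv_pos.mpr hpos)] at hle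
        rw [heq]
        calc ‖τ ⟨z * y, (hz y hy).1⟩‖
            = nY y * ((nY y)⁻¹ * ‖τ ⟨z * y, (hz y hy).1⟩‖) := by
              field_simp
          _ ≤ nY y * nYY z := mul_le_mul_of_nonneg_left hle hpos.le
          _ = nYY z * nY y := mul_comm _ _
    obtain ⟨x, hx, hfx⟩ := hrefl f fadd fsmul fbdd
    have hzx : z - x ∈ YY := by
      have hrw : z - x = z + (-1 : ℂ) • x := by rw [neg_one_smul, sub_eq_add_neg]
      rw [hrw]
      exact hYYadd z hz _ (hYYsmul (-1) x (hXsubYY hx))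
    have key : ∀ y, ∀ hy : y ∈ Y, ∀ h : (z - x) * y ∈ L1, τ ⟨(z - x) * y, h⟩ = 0 := by
      intro y hy h
      have h1 : τ ⟨(z - x) * y, h⟩ = τ ⟨y * (z - x), (hzx y hy).2⟩ := (hYTr y hy (z - x) hzx).symm
      have h2 : τ ⟨y * (z - x), (hzx y hy).2⟩
          = τ ⟨y * z, (hz y hy).2⟩ - τ ⟨y * x, (hy x hx).1⟩ := by
        rw [tau_congr τ (mul_sub y z x) ((hzx y hy).2)
          (L1.sub_mem (hz y hy).2 (hy x hx).1), tau_sub τ (hz y hy).2 (hy x hx).1]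
      have h3 : τ ⟨y * z, (hz y hy).2⟩ = τ ⟨y * x, (hy x hx).1⟩ := by
        rw [← hfval y hy]; exact hfx y hy
      rw [h1, h2, h3, sub_self]
    have hz0 : nYY (z - x) = 0 := hzero _ hzx key
    have hzx0 : z - x = 0 := (hYYdf _ hzx).mp hz0
    have : z = x := sub_eq_zero.mp hzx0
    rw [this]; exact hx
  refine ⟨Set.Subset.antisymm hYYsubX hXsubYY, ?_⟩
  -- norm equality
  intro x hx
  by_cases hx0 : x = 0
  · subst hx0
    rw [(hXdef 0 hX0).mpr rfl]
    exact hzero 0 (hXsubYY hX0) (fun y hy h => tau_zero τ (zero_mul y) h)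
  · have hnx : 0 < nX x := (hXnn x hx).lt_of_ne (fun h => hx0 ((hXdef x hx).mp h.symm))
    have hxYY : x ∈ YY := hXsubYY hx
    have hub : nYY x ≤ nX x := by
      rw [hnYYdefn]
      refine nYdef_le L1 τ Y nY hnx.le ?_
      intro y hy h1 hm
      have ht : τ ⟨x * y, hm⟩ = τ ⟨y * x, (hy x hx).1⟩ := hXTr x hx y hy
      rw [ht]
      set d : ℂ := (((nX x)⁻¹ : ℝ) : ℂ) with hd
      have hx' : d • x ∈ X := hXsmul d x hx
      have hnx1 : nX (d • x) = 1 := by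
        rw [hXhom d x hx, hd, Complex.norm_real, Real.norm_eq_abs,
          abs_of_pos (inv_pos.mpr hnx), inv_mul_cancel₀ hnx.ne']
      have hyx' : y * (d • x) ∈ L1 := (hy _ hx').1
      have hle1 : ‖τ ⟨y * (d • x), hyx'⟩‖ ≤ nY y := by
        rw [hnYdefn]
        exact le_nYdef L1 τ X nX (hXBdd y hy) hx' hnx1 _
      rw [h1] at hle1
      have heq : τ ⟨y * (d • x), hyx'⟩ = d * τ ⟨y * x, (hy x hx).1⟩ := by
        rw [tau_congr τ (mul_smul_comm d y x) hyx' (L1.smul_mem d (hy x hx).1),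
          tau_smul τ d (hy x hx).1]
      rw [heq, norm_mul, hd, Complex.norm_real, Real.norm_eq_abs, abs_of_pos (inv_pos.mpr hnx)] at hle1
      calc ‖τ ⟨y * x, (hy x hx).1⟩‖
          = nX x * ((nX x)⁻¹ * ‖τ ⟨y * x, (hy x hx).1⟩‖) := by field_simp
        _ ≤ nX x * 1 := mul_le_mul_of_nonneg_left hle1 hnx.le
        _ = nX x := mul_one _
    have hlb : nX x ≤ nYY x := by
      obtain ⟨f, fadd, fsmul, fbnd, fx⟩ :=
        exists_norming X nX hX0 hXadd hXsmul hXdef hXhom hXtri x hx hx0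
      obtain ⟨y, hy, hfy⟩ := hXSurj f fadd fsmul
        ⟨1, fun a ha => (fbnd a ha).trans (one_mul (nX a)).symm.le⟩
      have hτ : τ ⟨y * x, (hy x hx).1⟩ = (nX x : ℂ) := (hfy x hx).symm.trans fx
      have hyn : nY y ≤ 1 := by
        rw [hnYdefn]
        refine nYdef_le L1 τ X nX zero_le_one ?_
        intro a ha h1 hm
        have h2 : τ ⟨y * a, hm⟩ = f a := (hfy a ha).symm
        rw [h2]
        exact (fbnd a ha).trans h1.le
      have hy0 : nY y ≠ 0 := by
        intro h0
        have hyy0 : y = 0 := (hYdf y hy).mp h0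
        have : τ ⟨y * x, (hy x hx).1⟩ = 0 := tau_zero τ (by rw [hyy0, zero_mul]) _
        rw [hτ] at this
        exact hnx.ne' (by exact_mod_cast this)
      have hypos : 0 < nY y := (hYnn y hy).lt_of_ne (Ne.symm hy0)
      set c : ℂ := (((nY y)⁻¹ : ℝ) : ℂ) with hc
      have hy' : c • y ∈ Y := hYsmul c y hy
      have h1 : nY (c • y) = 1 := by
        rw [hYhom c y hy, hc, Complex.norm_real, Real.norm_eq_abs,
          abs_of_pos (inv_pos.mpr hypos), inv_mul_cancel₀ hy0]
      have hm : x * (c • y) ∈ L1 := (hxYY _ hy').1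
      have hle : ‖τ ⟨x * (c • y), hm⟩‖ ≤ nYY x := by
        rw [hnYYdefn]
        exact le_nYdef L1 τ Y nY (hYBdd x hxYY) hy' h1 _
      have hval : τ ⟨x * (c • y), hm⟩ = c * (nX x : ℂ) := by
        rw [tau_congr τ (mul_smul_comm c x y) hm (L1.smul_mem c (hxYY y hy).1),
          tau_smul τ c (hxYY y hy).1]
        congr 1
        have := hXTr x hx y hy
        rw [this] at *
        exact hτ
      rw [hval, norm_mul, hc, Complex.norm_real, Real.norm_eq_abs, abs_of_pos (inv_pos.mpr hypos),
        Complex.norm_real, Real.norm_eq_abs, abs_of_pos hnx] at hle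
      have hinv : 1 ≤ (nY y)⁻¹ := by
        rw [le_inv_comm₀]
        · simpa using hyn
        · exact one_pos
        · exact hypos
      calc nX x = 1 * nX x := (one_mul _).symm
        _ ≤ (nY y)⁻¹ * nX x := mul_le_mul_of_nonneg_right hinv hnx.le
        _ ≤ nYY x := hle
    exact le_antisymm hub hlb
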